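/- (Stieltjes continuity theorem) For Borel probability measures μ, μ₁, μ₂, … on ℝ, the sequence μₙ converges weakly to μ if and only if s_{μₙ}(z) → s_μ(z) for every z with Im z > 0. -/

import Mathlib

open MeasureTheory Filter

/-- The Stieltjes transform of a measure on `ℝ`. -/
noncomputable def stieltjes (μ : Measure ℝ) (z : ℂ) : ℂ :=
  ∫ x, ((x : ℂ) - z)⁻¹ ∂μ

open Complex Topology OnePoint

namespace StieltjesSW

lemma sub_ne_zero' {z : ℂ} (hz : z.im ≠ 0) (x : ℝ) : (x : ℂ) - z ≠ 0 := by
  intro h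
  apply hz
  have := congrArg Complex.im h
  simpa using this.symm

lemma norm_res_le {z : ℂ} (hz : z.im ≠ 0) (x : ℝ) : ‖((x : ℂ) - z)⁻¹‖ ≤ |z.im|⁻¹ := by
  rw [norm_inv]
  apply inv_anti₀ (abs_pos.mpr hz)
  calc |z.im| = |((x:ℂ) - z).im| := by simp
    _ ≤ ‖(x:ℂ) - z‖ := Complex.abs_im_le_norm _

lemma res_continuous {z : ℂ} (hz : z.im ≠ 0) :
    Continuous (fun x : ℝ => ((x : ℂ) - z)⁻¹) :=
  ((Complex.continuous_ofReal.sub continuous_const).inv₀ (sub_ne_zero' hz))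

lemma res_tendsto {z : ℂ} : Tendsto (fun x : ℝ => ((x : ℂ) - z)⁻¹) (cocompact ℝ) (𝓝 0) := by
  have h1 : Tendsto (fun x : ℝ => ‖(x : ℂ) - z‖) (cocompact ℝ) atTop := by
    apply tendsto_atTop_mono (f := fun x : ℝ => ‖(x:ℝ)‖ - ‖z‖)
    · intro x
      calc ‖(x:ℝ)‖ - ‖z‖ = ‖(x:ℂ)‖ - ‖z‖ := by simp
        _ ≤ ‖(x:ℂ) - z‖ := norm_sub_norm_le _ _
    · exact tendsto_atTop_add_const_right _ _ tendsto_norm_cocompact_atTop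
  rw [tendsto_zero_iff_norm_tendsto_zero]
  simpa [norm_inv, Pi.inv_def] using h1.inv_tendsto_atTop

/-- The resolvent function extended to the one-point compactification. -/
noncomputable def F (z : ℂ) (hz : z.im ≠ 0) : C(OnePoint ℝ, ℂ) :=
  OnePoint.continuousMapMk ⟨_, res_continuous hz⟩ 0
    (by rw [Filter.coclosedCompact_eq_cocompact]; exact res_tendsto)

@[simp] lemma F_coe (z : ℂ) (hz : z.im ≠ 0) (x : ℝ) : F z hz x = ((x : ℂ) - z)⁻¹ := rfl

@[simp] lemma F_infty (z : ℂ) (hz : z.im ≠ 0) : F z hz ∞ = 0 := rfl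

end StieltjesSW
namespace StieltjesSW

lemma norm_F_sub_F_le {z w : ℂ} (hz : z.im ≠ 0) (hw : w.im ≠ 0) :
    ‖F w hw - F z hz‖ ≤ ‖w - z‖ * (|w.im|⁻¹ * |z.im|⁻¹) := by
  rw [ContinuousMap.norm_le _ (by positivity)]
  intro p
  induction p using OnePoint.rec with
  | infty => simp; positivity
  | coe x =>
    have key : ((x:ℂ) - w)⁻¹ - ((x:ℂ) - z)⁻¹ = (w - z) * (((x:ℂ) - w)⁻¹ * ((x:ℂ) - z)⁻¹) := by
      field_simp [sub_ne_zero' hz x, sub_ne_zero' hw x]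
      ring
    simp only [ContinuousMap.sub_apply, F_coe, key, norm_mul]
    gcongr
    · exact norm_res_le hw x
    · exact norm_res_le hz x

/-- Partial fractions. -/
lemma F_mul_F {z w : ℂ} (hz : z.im ≠ 0) (hw : w.im ≠ 0) (hzw : z ≠ w) :
    F z hz * F w hw = (z - w)⁻¹ • (F z hz - F w hw) := by
  ext p
  induction p using OnePoint.rec with
  | infty => simp
  | coe x =>
    simp only [ContinuousMap.mul_apply, ContinuousMap.smul_apply, ContinuousMap.sub_apply, F_coe,
      smul_eq_mul]
    field_simp [sub_ne_zero' hz x, sub_ne_zero' hw x, sub_ne_zero.mpr hzw]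
    ring

lemma star_F {z : ℂ} (hz : z.im ≠ 0) :
    star (F z hz) = F (starRingEnd ℂ z) (by simpa using hz) := by
  ext p
  induction p using OnePoint.rec with
  | infty => simp
  | coe x =>
    simp only [ContinuousMap.star_apply, F_coe, ← map_inv₀]
    rw [← Complex.conj_conj ((x:ℂ) - starRingEnd ℂ z)]
    simp [map_sub, Complex.conj_ofReal]

end StieltjesSW
namespace StieltjesSW

/-- Generating set: constants and resolvents. -/
def S : Set C(OnePoint ℝ, ℂ) := insert 1 {g | ∃ z, ∃ hz : z.im ≠ 0, g = F z hz}

/-- The closed linear span of the generators. -/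
noncomputable def W : Submodule ℂ C(OnePoint ℝ, ℂ) :=
  (Submodule.span ℂ S).topologicalClosure

lemma isClosed_W : IsClosed (W : Set C(OnePoint ℝ, ℂ)) :=
  Submodule.isClosed_topologicalClosure _

lemma span_le_W : Submodule.span ℂ S ≤ W := Submodule.le_topologicalClosure _

lemma F_mem_span {z : ℂ} (hz : z.im ≠ 0) : F z hz ∈ Submodule.span ℂ S :=
  Submodule.subset_span (Set.mem_insert_iff.mpr (Or.inr ⟨z, hz, rfl⟩))

lemma one_mem_span : (1 : C(OnePoint ℝ, ℂ)) ∈ Submodule.span ℂ S :=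
  Submodule.subset_span (Set.mem_insert _ _)

lemma F_mul_F_mem {z w : ℂ} (hz : z.im ≠ 0) (hw : w.im ≠ 0) :
    F z hz * F w hw ∈ W := by
  rcases eq_or_ne z w with rfl | hne
  · -- limit of products with distinct poles
    have him : ∀ k : ℕ, (z + (((k:ℝ)+1)⁻¹ : ℝ)).im ≠ 0 := fun k => by simpa using hz
    have hmem : ∀ k : ℕ, F z hz * F (z + (((k:ℝ)+1)⁻¹ : ℝ)) (him k) ∈ W := by
      intro k
      have hne' : z ≠ z + (((k:ℝ)+1)⁻¹ : ℝ) := by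
        intro h
        have : ((((k:ℝ)+1)⁻¹ : ℝ) : ℂ) = 0 := by
          have := congrArg (fun t => t - z) h
          simpa [add_sub_cancel_left] using this.symm
        simp only [Complex.ofReal_eq_zero] at this
        exact (by positivity : (0:ℝ) < ((k:ℝ)+1)⁻¹).ne' this
      rw [F_mul_F hz (him k) hne']
      exact span_le_W (Submodule.smul_mem _ _
        (Submodule.sub_mem _ (F_mem_span hz) (F_mem_span (him k))))
    have htend : Tendsto (fun k : ℕ => F z hz * F (z + (((k:ℝ)+1)⁻¹ : ℝ)) (him k))
        atTop (𝓝 (F z hz * F z hz)) := by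
      rw [tendsto_iff_dist_tendsto_zero]
      apply squeeze_zero (g := fun k : ℕ => (1/((k:ℝ)+1)) * (‖F z hz‖ * (|z.im|⁻¹ * |z.im|⁻¹)))
        (fun k => dist_nonneg)
      · intro k
        rw [dist_eq_norm]
        calc ‖F z hz * F (z + (((k:ℝ)+1)⁻¹ : ℝ)) (him k) - F z hz * F z hz‖
            = ‖F z hz * (F (z + (((k:ℝ)+1)⁻¹ : ℝ)) (him k) - F z hz)‖ := by rw [mul_sub]
          _ ≤ ‖F z hz‖ * ‖F (z + (((k:ℝ)+1)⁻¹ : ℝ)) (him k) - F z hz‖ := norm_mul_le _ _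
          _ ≤ ‖F z hz‖ * (‖(z + ((((k:ℝ)+1)⁻¹ : ℝ):ℂ)) - z‖ * (|(z + ((((k:ℝ)+1)⁻¹:ℝ):ℂ)).im|⁻¹ * |z.im|⁻¹)) := by
              gcongr
              exact norm_F_sub_F_le hz (him k)
          _ = (1/((k:ℝ)+1)) * (‖F z hz‖ * (|z.im|⁻¹ * |z.im|⁻¹)) := by
              rw [add_sub_cancel_left]
              simp only [Complex.add_im, Complex.ofReal_im, add_zero]
              rw [Complex.norm_real]
              rw [Real.norm_eq_abs, abs_of_pos (by positivity : (0:ℝ) < ((k:ℝ)+1)⁻¹)]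
              ring
      · simpa using tendsto_one_div_add_atTop_nhds_zero_nat.mul_const
          (‖F z hz‖ * (|z.im|⁻¹ * |z.im|⁻¹))
    exact isClosed_W.mem_of_tendsto htend (Eventually.of_forall hmem)
  · rw [F_mul_F hz hw hne]
    exact span_le_W (Submodule.smul_mem _ _
      (Submodule.sub_mem _ (F_mem_span hz) (F_mem_span hw)))

lemma mul_mem_span_W {a b : C(OnePoint ℝ, ℂ)}
    (ha : a ∈ Submodule.span ℂ S) (hb : b ∈ Submodule.span ℂ S) : a * b ∈ W := by
  induction hb using Submodule.span_induction with
  | mem x hx =>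
    induction ha using Submodule.span_induction with
    | mem y hy =>
      rcases hx with rfl | ⟨z, hz, rfl⟩
      · rw [mul_one]; exact span_le_W (Submodule.subset_span hy)
      · rcases hy with rfl | ⟨w, hw, rfl⟩
        · rw [one_mul]; exact span_le_W (F_mem_span hz)
        · exact F_mul_F_mem hw hz
    | zero => rw [zero_mul]; exact W.zero_mem
    | add y y' hy hy' ih ih' => rw [add_mul]; exact W.add_mem ih ih'
    | smul c y hy ih => rw [smul_mul_assoc]; exact W.smul_mem c ih
  | zero => rw [mul_zero]; exact W.zero_mem
  | add y y' hy hy' ih ih' => rw [mul_add]; exact W.add_mem ih ih'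
  | smul c y hy ih => rw [mul_smul_comm]; exact W.smul_mem c ih

lemma mul_mem_W {a b : C(OnePoint ℝ, ℂ)} (ha : a ∈ W) (hb : b ∈ W) : a * b ∈ W := by
  have ha' : a ∈ closure (Submodule.span ℂ S : Set C(OnePoint ℝ, ℂ)) := ha
  have hb' : b ∈ closure (Submodule.span ℂ S : Set C(OnePoint ℝ, ℂ)) := hb
  rcases mem_closure_iff_seq_limit.mp ha' with ⟨u, hu, hul⟩
  rcases mem_closure_iff_seq_limit.mp hb' with ⟨v, hv, hvl⟩
  have : Tendsto (fun n => u n * v n) atTop (𝓝 (a * b)) := hul.mul hvl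
  exact isClosed_W.mem_of_tendsto this
    (Eventually.of_forall fun n => mul_mem_span_W (hu n) (hv n))

lemma star_mem_W {a : C(OnePoint ℝ, ℂ)} (ha : a ∈ W) : star a ∈ W := by
  have key : ∀ b ∈ Submodule.span ℂ S, star b ∈ Submodule.span ℂ S := by
    intro b hb
    induction hb using Submodule.span_induction with
    | mem x hx =>
      rcases hx with rfl | ⟨z, hz, rfl⟩
      · rw [star_one]; exact one_mem_span
      · rw [star_F hz]; exact F_mem_span _
    | zero => rw [star_zero]; exact Submodule.zero_mem _
    | add y y' hy hy' ih ih' => rw [star_add]; exact Submodule.add_mem _ ih ih'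
    | smul c y hy ih =>
      rw [star_smul]
      exact Submodule.smul_mem _ _ ih
  rcases mem_closure_iff_seq_limit.mp (ha :
      a ∈ closure (Submodule.span ℂ S : Set C(OnePoint ℝ, ℂ))) with ⟨u, hu, hul⟩
  have : Tendsto (fun n => star (u n)) atTop (𝓝 (star a)) :=
    (continuous_star.tendsto a).comp hul
  exact isClosed_W.mem_of_tendsto this (Eventually.of_forall fun n => span_le_W (key _ (hu n)))

end StieltjesSW
namespace StieltjesSW

/-- `W` as a star subalgebra. -/
noncomputable def A : StarSubalgebra ℂ C(OnePoint ℝ, ℂ) where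
  carrier := W
  mul_mem' := mul_mem_W
  one_mem' := span_le_W one_mem_span
  add_mem' := fun h h' => W.add_mem h h'
  zero_mem' := W.zero_mem
  algebraMap_mem' := fun c => by
    have : algebraMap ℂ C(OnePoint ℝ, ℂ) c = c • (1 : C(OnePoint ℝ, ℂ)) := by
      simp [Algebra.algebraMap_eq_smul_one]
    rw [this]
    exact W.smul_mem c (span_le_W one_mem_span)
  star_mem' := star_mem_W

lemma I_im_ne : (Complex.I).im ≠ 0 := by simp

lemma A_separates : A.SeparatesPoints := by
  intro p q hpq
  refine ⟨_, ⟨F Complex.I I_im_ne, span_le_W (F_mem_span I_im_ne), rfl⟩, ?_⟩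
  induction p using OnePoint.rec with
  | infty =>
    induction q using OnePoint.rec with
    | infty => exact absurd rfl hpq
    | coe y =>
      simp only [F_infty, F_coe]
      intro h
      exact sub_ne_zero' I_im_ne y (by simpa using h.symm)
  | coe x =>
    induction q using OnePoint.rec with
    | infty =>
      simp only [F_infty, F_coe]
      intro h
      exact sub_ne_zero' I_im_ne x (by simpa using h)
    | coe y =>
      simp only [F_coe]
      intro h
      apply hpq
      have := inv_injective h
      have : (x:ℂ) = y := by
        have := congrArg (fun t => t + Complex.I) this
        simpa using this
      norm_cast at this
      rw [this]

lemma W_eq_top : W = ⊤ := by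
  have h := ContinuousMap.starSubalgebra_topologicalClosure_eq_top_of_separatesPoints A A_separates
  have hclosed : A.topologicalClosure = A := by
    apply le_antisymm _ A.le_topologicalClosure
    intro x hx
    have h2 : x ∈ closure (W : Set C(OnePoint ℝ, ℂ)) := hx
    rw [isClosed_W.closure_eq] at h2
    exact h2
  rw [hclosed] at h
  rw [eq_top_iff]
  intro g _
  have : g ∈ A := h ▸ trivial
  exact this

lemma mem_W (g : C(OnePoint ℝ, ℂ)) : g ∈ W := W_eq_top ▸ trivial

end StieltjesSW
namespace StieltjesSW

lemma integrable_comp (g : C(OnePoint ℝ, ℂ)) (ν : Measure ℝ) [IsProbabilityMeasure ν] :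
    Integrable (fun x : ℝ => g x) ν := by
  apply Integrable.mono' (integrable_const ‖g‖)
  · exact (g.continuous.comp OnePoint.continuous_coe).aestronglyMeasurable
  · exact ae_of_all _ fun x => g.norm_coe_le_norm _

lemma integral_dist_le (g h : C(OnePoint ℝ, ℂ)) (ν : Measure ℝ) [IsProbabilityMeasure ν] :
    dist (∫ x, g x ∂ν) (∫ x, h x ∂ν) ≤ dist g h := by
  rw [dist_eq_norm, ← integral_sub (integrable_comp g ν) (integrable_comp h ν)]
  calc ‖∫ x, (g x - h x) ∂ν‖
      ≤ ‖g - h‖ * (ν Set.univ).toReal := norm_integral_le_of_norm_le_const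
        (ae_of_all _ fun x => by
          simpa using (g - h).norm_coe_le_norm (x : OnePoint ℝ))
    _ = dist g h := by simp [dist_eq_norm]

end StieltjesSW
/-- copy of the statement's definition, for aux lemmas -/
noncomputable def stieltjesAux (μ : Measure ℝ) (z : ℂ) : ℂ :=
  ∫ x, ((x : ℂ) - z)⁻¹ ∂μ

namespace StieltjesSW

lemma stieltjes_conj (ν : Measure ℝ) (z : ℂ) :
    stieltjesAux ν z = starRingEnd ℂ (stieltjesAux ν (starRingEnd ℂ z)) := by
  rw [stieltjesAux, stieltjesAux, ← integral_conj]
  congr 1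
  ext x
  rw [map_inv₀]
  congr 1
  simp [map_sub, Complex.conj_ofReal]

lemma tendsto_integral_of_stieltjes (μ : Measure ℝ) (ν : ℕ → Measure ℝ)
    [IsProbabilityMeasure μ] [∀ n, IsProbabilityMeasure (ν n)]
    (hyp : ∀ z : ℂ, 0 < z.im →
      Tendsto (fun n => stieltjesAux (ν n) z) atTop (𝓝 (stieltjesAux μ z)))
    (g : C(OnePoint ℝ, ℂ)) :
    Tendsto (fun n => ∫ x, g x ∂(ν n)) atTop (𝓝 (∫ x, g x ∂μ)) := by
  -- step 1 : members of the span
  have hspan : ∀ h ∈ Submodule.span ℂ S,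
      Tendsto (fun n => ∫ x, (h : C(OnePoint ℝ, ℂ)) x ∂(ν n)) atTop
        (𝓝 (∫ x, (h : C(OnePoint ℝ, ℂ)) x ∂μ)) := by
    intro h hh
    induction hh using Submodule.span_induction with
    | mem x hx =>
      rcases hx with rfl | ⟨z, hz, rfl⟩
      · simp only [ContinuousMap.one_apply]
        simp only [integral_const, probReal_univ, one_smul]
        exact tendsto_const_nhds
      · have key : ∀ (ρ : Measure ℝ), ∫ x, F z hz x ∂ρ = stieltjesAux ρ z := by
          intro ρ
          simp only [F_coe, stieltjesAux]
        simp only [key]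
        rcases lt_or_gt_of_ne hz with hneg | hpos
        · have hconj : (starRingEnd ℂ z).im > 0 := by
            simp only [Complex.conj_im]; linarith
          have := hyp _ hconj
          have := ((continuous_conj.tendsto _).comp this)
          simp only [Function.comp_def] at this
          convert this using 2 with n
          · exact stieltjes_conj (ν n) z
          · exact stieltjes_conj μ z
        · exact hyp z hpos
    | zero =>
      simp only [ContinuousMap.zero_apply, integral_zero]
      exact tendsto_const_nhds
    | add y y' hy hy' ih ih' =>
      simp only [ContinuousMap.add_apply]
      have e : ∀ (ρ : Measure ℝ) (_ : IsProbabilityMeasure ρ),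
          ∫ x, (y x + y' x) ∂ρ = (∫ x, y x ∂ρ) + ∫ x, y' x ∂ρ := fun ρ hρ =>
        integral_add (integrable_comp y ρ) (integrable_comp y' ρ)
      simp only [e _ inferInstance]
      exact ih.add ih'
    | smul c y hy ih =>
      simp only [ContinuousMap.smul_apply, integral_smul]
      exact ih.const_smul c
  -- step 2 : pass to the closure
  have hg : g ∈ closure (Submodule.span ℂ S : Set C(OnePoint ℝ, ℂ)) := mem_W g
  rw [Metric.tendsto_atTop]
  intro ε hε
  obtain ⟨h, hhs, hdist⟩ := Metric.mem_closure_iff.mp hg (ε/3) (by linarith)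
  obtain ⟨N, hN⟩ := Metric.tendsto_atTop.mp (hspan h hhs) (ε/3) (by linarith)
  refine ⟨N, fun n hn => ?_⟩
  calc dist (∫ x, g x ∂(ν n)) (∫ x, g x ∂μ)
      ≤ dist (∫ x, g x ∂(ν n)) (∫ x, h x ∂(ν n)) +
        dist (∫ x, h x ∂(ν n)) (∫ x, h x ∂μ) +
        dist (∫ x, h x ∂μ) (∫ x, g x ∂μ) := dist_triangle4 _ _ _ _
    _ < ε/3 + ε/3 + ε/3 := by
        apply add_lt_add_of_lt_of_lt (add_lt_add_of_le_of_lt ?_ (hN n hn)) ?_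
        · exact le_trans (integral_dist_le g h (ν n)) hdist.le
        · exact lt_of_le_of_lt (integral_dist_le h g μ) (by rwa [dist_comm])
    _ = ε := by ring

end StieltjesSW
namespace StieltjesSW

lemma integrable_of_bounded {E : Type*} [NormedAddCommGroup E] {f : ℝ → E}
    (hc : Continuous f) (C : ℝ) (hb : ∀ x, ‖f x‖ ≤ C) (ν : Measure ℝ)
    [IsProbabilityMeasure ν] : Integrable f ν := by
  apply Integrable.mono' (integrable_const C) hc.aestronglyMeasurable
  exact ae_of_all _ hb

/-- cutoff functions -/
noncomputable def chi (k : ℕ) (x : ℝ) : ℝ :=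
  max (1 - Metric.infDist x (Set.Icc (-(k:ℝ)) k)) 0

lemma chi_continuous (k : ℕ) : Continuous (chi k) :=
  ((continuous_const.sub (Metric.continuous_infDist_pt _)).max continuous_const)

lemma chi_nonneg (k : ℕ) (x : ℝ) : 0 ≤ chi k x := le_max_right _ _

lemma chi_le_one (k : ℕ) (x : ℝ) : chi k x ≤ 1 := by
  apply max_le _ zero_le_one
  have := Metric.infDist_nonneg (s := Set.Icc (-(k:ℝ)) k) (x := x)
  linarith

lemma chi_eq_one (k : ℕ) (x : ℝ) (hx : x ∈ Set.Icc (-(k:ℝ)) k) : chi k x = 1 := by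
  rw [chi, Metric.infDist_zero_of_mem hx]
  simp

lemma chi_eq_zero (k : ℕ) (x : ℝ) (hx : (k:ℝ) + 1 ≤ |x|) : chi k x = 0 := by
  have hne : (Set.Icc (-(k:ℝ)) k).Nonempty := ⟨0, by simp⟩
  have h1 : (1:ℝ) ≤ Metric.infDist x (Set.Icc (-(k:ℝ)) k) := by
    by_contra hcon
    rw [not_le, Metric.infDist_lt_iff hne] at hcon
    obtain ⟨y, hy, hd⟩ := hcon
    apply absurd hd
    rw [not_lt, Real.dist_eq]
    rcases le_or_gt 0 x with hx0 | hx0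
    · rw [_root_.abs_of_pos (by rw [_root_.abs_of_nonneg hx0] at hx; linarith [hy.2] : 0 < x - y)]
      rw [_root_.abs_of_nonneg hx0] at hx
      linarith [hy.2]
    · rw [_root_.abs_of_neg (by rw [_root_.abs_of_neg hx0] at hx; linarith [hy.1] : x - y < 0)]
      rw [_root_.abs_of_neg hx0] at hx
      linarith [hy.1]
  rw [chi, max_eq_right]
  linarith

lemma chi_tendsto_one (x : ℝ) : Tendsto (fun k => chi k x) atTop (𝓝 1) := by
  apply tendsto_const_nhds.congr'
  filter_upwards [eventually_ge_atTop (⌈|x|⌉₊)] with k hk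
  rw [chi_eq_one k x]
  constructor
  · have : |x| ≤ (k:ℝ) := le_trans (Nat.le_ceil _) (by exact_mod_cast hk)
    linarith [neg_abs_le x, abs_nonneg x]
  · exact le_trans (le_abs_self x) (le_trans (Nat.le_ceil _) (by exact_mod_cast hk))

lemma chi_integral_tendsto (μ : Measure ℝ) [IsProbabilityMeasure μ] :
    Tendsto (fun k => ∫ x, chi k x ∂μ) atTop (𝓝 1) := by
  have h := MeasureTheory.tendsto_integral_of_dominated_convergence (μ := μ)
    (F := fun k x => chi k x) (f := fun _ => (1:ℝ)) (bound := fun _ => (1:ℝ))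
    (fun k => (chi_continuous k).aestronglyMeasurable)
    (integrable_const 1)
    (fun k => ae_of_all _ fun x => by
      rw [Real.norm_eq_abs, _root_.abs_of_nonneg (chi_nonneg k x)]; exact chi_le_one k x)
    (ae_of_all _ fun x => chi_tendsto_one x)
  simpa using h

/-- extension of a compactly vanishing real function to the compactification -/
noncomputable def extC (g : ℝ → ℝ) (hc : Continuous g) (k : ℕ)
    (h0 : ∀ x, (k:ℝ) + 1 ≤ |x| → g x = 0) : C(OnePoint ℝ, ℂ) :=
  OnePoint.continuousMapMk ⟨fun x => (g x : ℂ), by fun_prop⟩ 0 (by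
    rw [Filter.coclosedCompact_eq_cocompact]
    apply tendsto_const_nhds.congr'
    rw [Filter.eventuallyEq_iff_exists_mem]
    refine ⟨(Set.Icc (-((k:ℝ)+1)) ((k:ℝ)+1))ᶜ, ?_, ?_⟩
    · rw [Filter.hasBasis_cocompact.mem_iff]
      exact ⟨_, isCompact_Icc, subset_rfl⟩
    · intro x hx
      simp only [Set.mem_compl_iff, Set.mem_Icc, not_and_or, not_le] at hx
      have : (k:ℝ) + 1 ≤ |x| := by
        rcases hx with h | h
        · rw [_root_.abs_of_neg (by linarith [Nat.cast_nonneg (α := ℝ) k] : x < 0)]; linarith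
        · linarith [le_abs_self x]
      simp [h0 x this])

@[simp] lemma extC_coe (g : ℝ → ℝ) (hc : Continuous g) (k : ℕ) (h0) (x : ℝ) :
    extC g hc k h0 x = (g x : ℂ) := rfl

end StieltjesSW
namespace StieltjesSW

lemma chi_norm_le (k : ℕ) (x : ℝ) : ‖chi k x‖ ≤ 1 := by
  rw [Real.norm_eq_abs, _root_.abs_of_nonneg (chi_nonneg k x)]; exact chi_le_one k x

lemma cutoff_err (ρ : Measure ℝ) [IsProbabilityMeasure ρ] (f : ℝ → ℝ) (hf : Continuous f)
    (C : ℝ) (hC : ∀ x, |f x| ≤ C) (k : ℕ) :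
    |(∫ x, f x ∂ρ) - ∫ x, f x * chi k x ∂ρ| ≤ C * (1 - ∫ x, chi k x ∂ρ) := by
  have hC0 : 0 ≤ C := le_trans (abs_nonneg _) (hC 0)
  have hfint : Integrable f ρ :=
    integrable_of_bounded hf C (fun x => by simpa using hC x) ρ
  have hfχ : Integrable (fun x => f x * chi k x) ρ := by
    apply integrable_of_bounded (hf.mul (chi_continuous k)) C _ ρ
    intro x
    rw [Real.norm_eq_abs, Pi.mul_apply, abs_mul]
    calc |f x| * |chi k x| ≤ C * 1 := by
          apply mul_le_mul (hC x) _ (abs_nonneg _) hC0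
          rw [_root_.abs_of_nonneg (chi_nonneg k x)]; exact chi_le_one k x
      _ = C := mul_one C
  have hχint : Integrable (chi k) ρ :=
    integrable_of_bounded (chi_continuous k) 1 (chi_norm_le k) ρ
  rw [← integral_sub hfint hfχ]
  calc |∫ x, (f x - f x * chi k x) ∂ρ|
      ≤ ∫ x, |f x - f x * chi k x| ∂ρ := by
        rw [← Real.norm_eq_abs]
        exact (norm_integral_le_integral_norm _).trans_eq (by simp [Real.norm_eq_abs])
    _ ≤ ∫ x, C * (1 - chi k x) ∂ρ := by
        apply integral_mono (hfint.sub hfχ).abs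
          (((integrable_const 1).sub hχint).const_mul C)
        intro x
        simp only [Pi.sub_apply]
        have : f x - f x * chi k x = f x * (1 - chi k x) := by ring
        rw [this, abs_mul, _root_.abs_of_nonneg (by linarith [chi_le_one k x] : 0 ≤ 1 - chi k x)]
        apply mul_le_mul_of_nonneg_right (hC x) (by linarith [chi_le_one k x])
    _ = C * (1 - ∫ x, chi k x ∂ρ) := by
        rw [integral_const_mul, integral_sub (integrable_const 1) hχint]
        simp

lemma chi_integral_le_one (ρ : Measure ℝ) [IsProbabilityMeasure ρ] (k : ℕ) :
    ∫ x, chi k x ∂ρ ≤ 1 := by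
  have := integral_mono (integrable_of_bounded (chi_continuous k) 1 (chi_norm_le k) ρ)
    (integrable_const 1) (fun x => chi_le_one k x)
  simpa using this

end StieltjesSW
open StieltjesSW

theorem stieltjes_continuity (μ : Measure ℝ) (ν : ℕ → Measure ℝ)
    [IsProbabilityMeasure μ] [∀ n, IsProbabilityMeasure (ν n)] :
    (∀ f : ℝ → ℝ, Continuous f → (∃ C, ∀ x, |f x| ≤ C) →
        Tendsto (fun n => ∫ x, f x ∂(ν n)) atTop (nhds (∫ x, f x ∂μ))) ↔
    (∀ z : ℂ, 0 < z.im →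
        Tendsto (fun n => stieltjes (ν n) z) atTop (nhds (stieltjes μ z))) := by
  constructor
  · -- weak convergence implies Stieltjes convergence
    intro hL z hz
    have hz' : z.im ≠ 0 := ne_of_gt hz
    set u : ℝ → ℝ := fun x => (((x:ℂ) - z)⁻¹).re with hu_def
    set v : ℝ → ℝ := fun x => (((x:ℂ) - z)⁻¹).im with hv_def
    have hu : Continuous u := Complex.continuous_re.comp (res_continuous hz')
    have hv : Continuous v := Complex.continuous_im.comp (res_continuous hz')
    have hub : ∀ x, |u x| ≤ |z.im|⁻¹ := fun x =>
      le_trans (Complex.abs_re_le_norm _) (norm_res_le hz' x)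
    have hvb : ∀ x, |v x| ≤ |z.im|⁻¹ := fun x =>
      le_trans (Complex.abs_im_le_norm _) (norm_res_le hz' x)
    have hu' := hL u hu ⟨_, hub⟩
    have hv' := hL v hv ⟨_, hvb⟩
    have key : ∀ (ρ : Measure ℝ), IsProbabilityMeasure ρ →
        stieltjes ρ z = ↑(∫ x, u x ∂ρ) + (↑(∫ x, v x ∂ρ)) * Complex.I := by
      intro ρ hρ
      have hiu : Integrable (fun x => ((u x : ℝ) : ℂ)) ρ :=
        integrable_of_bounded (Complex.continuous_ofReal.comp hu) |z.im|⁻¹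
          (fun x => by simpa using hub x) ρ
      have hiv : Integrable (fun x => ((v x : ℝ) : ℂ) * Complex.I) ρ := by
        apply integrable_of_bounded ((Complex.continuous_ofReal.comp hv).mul continuous_const)
          |z.im|⁻¹ _ ρ
        intro x
        rw [Pi.mul_apply, norm_mul]
        simpa using hvb x
      calc stieltjes ρ z = ∫ x, (((u x : ℝ) : ℂ) + ((v x : ℝ) : ℂ) * Complex.I) ∂ρ := by
            unfold stieltjes
            congr 1
            ext x
            exact (Complex.re_add_im _).symm
        _ = (∫ x, ((u x : ℝ) : ℂ) ∂ρ) + ∫ x, (((v x : ℝ) : ℂ) * Complex.I) ∂ρ :=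
            integral_add hiu hiv
        _ = ↑(∫ x, u x ∂ρ) + (↑(∫ x, v x ∂ρ)) * Complex.I := by
            rw [integral_mul_const]
            congr 1
            · exact integral_ofReal (𝕜 := ℂ)
            · congr 1
              exact integral_ofReal (𝕜 := ℂ)
    simp only [key _ inferInstance]
    exact ((Complex.continuous_ofReal.tendsto _).comp hu').add
      (((Complex.continuous_ofReal.tendsto _).comp hv').mul_const Complex.I)
  · -- Stieltjes convergence implies weak convergence
    intro hS f hf hCex
    obtain ⟨C, hC⟩ := hCex
    have hC0 : 0 ≤ C := le_trans (abs_nonneg _) (hC 0)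
    have hS' : ∀ z : ℂ, 0 < z.im →
        Tendsto (fun n => stieltjesAux (ν n) z) atTop (𝓝 (stieltjesAux μ z)) := hS
    have hfint : ∀ (ρ : Measure ℝ), IsProbabilityMeasure ρ → Integrable f ρ := fun ρ hρ =>
      integrable_of_bounded hf C (fun x => by simpa using hC x) ρ
    rw [Metric.tendsto_atTop]
    intro ε hε
    set ε' := ε / (8 * (C + 1)) with hε'def
    have hε'0 : 0 < ε' := by positivity
    obtain ⟨k, hk⟩ := Metric.tendsto_atTop.mp (chi_integral_tendsto μ) ε' hε'0
    have hkμ : 1 - ∫ x, chi k x ∂μ < ε' := by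
      have := hk k le_rfl
      rw [Real.dist_eq, abs_sub_lt_iff] at this
      linarith [this.2]
    have hzero : ∀ x, (k:ℝ)+1 ≤ |x| → chi k x = 0 := chi_eq_zero k
    have hzero2 : ∀ x, (k:ℝ)+1 ≤ |x| → f x * chi k x = 0 := fun x hx => by
      rw [chi_eq_zero k x hx, mul_zero]
    have h1 := tendsto_integral_of_stieltjes μ ν hS'
      (extC (chi k) (chi_continuous k) k hzero)
    have h2 := tendsto_integral_of_stieltjes μ ν hS'
      (extC (fun x => f x * chi k x) (hf.mul (chi_continuous k)) k hzero2)
    have conv : ∀ (g : ℝ → ℝ) (hg : Continuous g) (h0 : ∀ x, (k:ℝ)+1 ≤ |x| → g x = 0)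
        (ρ : Measure ℝ), (∫ x, (extC g hg k h0) x ∂ρ) = ((∫ x, g x ∂ρ : ℝ) : ℂ) := by
      intro g hg h0 ρ
      simp only [extC_coe]
      exact integral_ofReal
    have h1' : Tendsto (fun n => ∫ x, chi k x ∂(ν n)) atTop (𝓝 (∫ x, chi k x ∂μ)) := by
      have := (Complex.continuous_re.tendsto _).comp h1
      simp only [Function.comp_def, conv] at this
      simpa using this
    have h2' : Tendsto (fun n => ∫ x, f x * chi k x ∂(ν n)) atTop
        (𝓝 (∫ x, f x * chi k x ∂μ)) := by
      have := (Complex.continuous_re.tendsto _).comp h2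
      simp only [Function.comp_def, conv] at this
      simpa using this
    obtain ⟨N1, hN1⟩ := Metric.tendsto_atTop.mp h1' ε' hε'0
    obtain ⟨N2, hN2⟩ := Metric.tendsto_atTop.mp h2' ε' hε'0
    refine ⟨max N1 N2, fun n hn => ?_⟩
    have hn1 := hN1 n (le_trans (le_max_left _ _) hn)
    have hn2 := hN2 n (le_trans (le_max_right _ _) hn)
    rw [Real.dist_eq] at hn1 hn2 ⊢
    have e1 : |(∫ x, f x ∂(ν n)) - ∫ x, f x * chi k x ∂(ν n)| ≤
        C * (1 - ∫ x, chi k x ∂(ν n)) := cutoff_err (ν n) f hf C hC k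
    have e2 : |(∫ x, f x ∂μ) - ∫ x, f x * chi k x ∂μ| ≤
        C * (1 - ∫ x, chi k x ∂μ) := cutoff_err μ f hf C hC k
    have e3 : 1 - ∫ x, chi k x ∂(ν n) < 2 * ε' := by
      have := abs_sub_lt_iff.mp hn1
      linarith [this.2]
    have hle : |(∫ x, f x ∂(ν n)) - ∫ x, f x ∂μ| ≤
        |(∫ x, f x ∂(ν n)) - ∫ x, f x * chi k x ∂(ν n)| +
        |(∫ x, f x * chi k x ∂(ν n)) - ∫ x, f x * chi k x ∂μ| +
        |(∫ x, f x * chi k x ∂μ) - ∫ x, f x ∂μ| := by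
      have := abs_sub_le ((∫ x, f x ∂(ν n))) (∫ x, f x * chi k x ∂(ν n)) (∫ x, f x ∂μ)
      have h4 := abs_sub_le (∫ x, f x * chi k x ∂(ν n)) (∫ x, f x * chi k x ∂μ) (∫ x, f x ∂μ)
      linarith
    have efin : |(∫ x, f x ∂(ν n)) - ∫ x, f x ∂μ| < (3*C + 1) * ε' := by
      rw [abs_sub_comm (∫ x, f x * chi k x ∂μ)] at hle
      have hνn : C * (1 - ∫ x, chi k x ∂(ν n)) ≤ C * (2 * ε') :=
        mul_le_mul_of_nonneg_left e3.le hC0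
      have hμb : C * (1 - ∫ x, chi k x ∂μ) ≤ C * ε' :=
        mul_le_mul_of_nonneg_left hkμ.le hC0
      calc |(∫ x, f x ∂(ν n)) - ∫ x, f x ∂μ| ≤ _ := hle
        _ < C * (2*ε') + ε' + C * ε' := by
            apply add_lt_add_of_lt_of_le (add_lt_add_of_le_of_lt (le_trans e1 hνn) hn2)
              (le_trans e2 hμb)
        _ = (3*C + 1) * ε' := by ring
    calc |(∫ x, f x ∂(ν n)) - ∫ x, f x ∂μ| < (3*C + 1) * ε' := efin
      _ ≤ ε / 2 := by
          rw [hε'def]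
          have heq : (3*C+1) * (ε / (8*(C+1))) = ((3*C+1)/(8*(C+1))) * ε := by ring
          rw [heq]
          have hfrac : (3*C+1)/(8*(C+1)) ≤ 1/2 := by
            rw [div_le_div_iff₀ (by positivity) (by norm_num)]
            linarith
          calc ((3*C+1)/(8*(C+1))) * ε ≤ (1/2) * ε := mul_le_mul_of_nonneg_right hfrac hε.le
            _ = ε / 2 := by ring
      _ < ε := by linarith
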